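/- Let X be a D-dimensional real vector space (D ≥ 1), α a linear functional on X, and C ⊆ X a compact convex set with max_{z∈C} |α(z)| = 1. Define C' := {z ∈ C : |α(z)| ≤ 1/(D+1)}. Then vol(C') ≤ (1 − e^{-2})·vol(C). -/

import Mathlib

open MeasureTheory Real Set Pointwise

lemma slice_exp_bound (D : ℕ) (hD : 1 ≤ D) :
    Real.exp (-2) ≤ ((D : ℝ) / (D + 2)) ^ D := by
  have hx : (1 : ℝ) ≤ (D : ℝ) := by exact_mod_cast hD
  have hx0 : (0 : ℝ) < D := by linarith
  have hx2 : (0 : ℝ) < (D : ℝ) + 2 := by linarith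
  have h1 : 1 + 2 / (D : ℝ) ≤ Real.exp (2 / D) := by
    have := Real.add_one_le_exp (2 / (D : ℝ)); linarith
  have h2 : Real.exp (-(2 / (D : ℝ))) ≤ (D : ℝ) / (D + 2) := by
    rw [Real.exp_neg]
    have h3 : (0 : ℝ) < 1 + 2 / (D : ℝ) := by positivity
    have h4 : ((D : ℝ) + 2) / D = 1 + 2 / D := by field_simp
    calc (Real.exp (2 / (D : ℝ)))⁻¹ ≤ (1 + 2 / (D : ℝ))⁻¹ := inv_anti₀ h3 h1
      _ = (D : ℝ) / (D + 2) := by rw [← h4, inv_div]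
  calc Real.exp (-2) = Real.exp (-(2 / (D : ℝ))) ^ D := by
        rw [← Real.exp_nat_mul]; congr 1; field_simp
    _ ≤ ((D : ℝ) / (D + 2)) ^ D := pow_le_pow_left₀ (Real.exp_nonneg _) h2 D

lemma slice_aux {X : Type*} [NormedAddCommGroup X] [NormedSpace ℝ X]
    [MeasurableSpace X] [BorelSpace X] [FiniteDimensional ℝ X]
    (μ : MeasureTheory.Measure X) [μ.IsAddHaarMeasure]
    (D : ℕ) (hD : 1 ≤ D) (hdim : Module.finrank ℝ X = D)
    (β : X →ₗ[ℝ] ℝ) (C : Set X) (hC : IsCompact C) (hconv : Convex ℝ C)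
    (z₀ : X) (hz₀C : z₀ ∈ C) (hz₀ : β z₀ = 1) :
    μ {z ∈ C | |β z| ≤ 1 / (D + 1)} ≤
      ENNReal.ofReal (1 - Real.exp (-2)) * μ C := by
  have hβc : Continuous β := β.continuous_of_finiteDimensional
  have hx : (1 : ℝ) ≤ (D : ℝ) := by exact_mod_cast hD
  have hx1 : (0 : ℝ) < (D : ℝ) + 1 := by linarith
  have hx2 : (0 : ℝ) < (D : ℝ) + 2 := by linarith
  set c : ℝ := 1 / ((D : ℝ) + 1) with hc
  set t : ℝ := 2 / ((D : ℝ) + 2) with ht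
  set s : ℝ := (D : ℝ) / ((D : ℝ) + 2) with hs
  have hts : t + s = 1 := by rw [ht, hs]; field_simp; ring
  have ht0 : 0 < t := by positivity
  have hs0 : 0 < s := by positivity
  have hs1 : s ≤ 1 := by rw [hs, div_le_one hx2]; linarith
  have hc0 : 0 < c := by positivity
  set C' : Set X := {z ∈ C | |β z| ≤ c} with hC'
  set B : Set X := C ∩ {z | -c ≤ β z} with hB
  have hC'B : C' ⊆ B := by
    rintro z ⟨hzC, hz⟩
    exact ⟨hzC, neg_le_of_abs_le hz⟩
  have hBC : B ⊆ C := inter_subset_left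
  have hBcpt : IsCompact B := hC.inter_right (isClosed_le continuous_const hβc)
  -- the homothety
  set T : X → X := fun z => t • z₀ + s • z with hT
  have hTcont : Continuous T := continuous_const.add (continuous_id.const_smul s)
  have hTB : T '' B ⊆ C ∩ {z | c ≤ β z} := by
    rintro _ ⟨z, ⟨hzC, hzc⟩, rfl⟩
    refine ⟨hconv hz₀C hzC ht0.le hs0.le hts, ?_⟩
    have hβT : β (T z) = t + s * β z := by simp [hT, hz₀]
    rw [Set.mem_setOf_eq, hβT]
    have hkey : t - s * c = c := by rw [ht, hs, hc]; field_simp; ring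
    have : s * (-c) ≤ s * β z := mul_le_mul_of_nonneg_left hzc hs0.le
    nlinarith
  have hTBB : T '' B ⊆ B := by
    intro z hz
    refine ⟨(hTB hz).1, ?_⟩
    have h2 : c ≤ β z := (hTB hz).2
    show -c ≤ β z
    linarith
  -- almost disjointness
  have hnull : μ (C' ∩ T '' B) = 0 := by
    have hsub : C' ∩ T '' B ⊆ {z | β z = c} := by
      rintro z ⟨⟨_, hz1⟩, hz2⟩
      exact le_antisymm (le_of_abs_le hz1) (hTB hz2).2
    refine measure_mono_null hsub ?_
    have hker : (LinearMap.ker β) ≠ ⊤ := by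
      intro h
      have hz : z₀ ∈ LinearMap.ker β := by rw [h]; trivial
      rw [LinearMap.mem_ker, hz₀] at hz; norm_num at hz
    have h0 : μ (LinearMap.ker β : Set X) = 0 :=
      Measure.addHaar_submodule μ _ hker
    have heq : {z | β z = c} = (c • z₀) +ᵥ (LinearMap.ker β : Set X) := by
      ext z
      simp only [Set.mem_vadd_set, Set.mem_setOf_eq, SetLike.mem_coe,
        LinearMap.mem_ker, vadd_eq_add]
      constructor
      · intro h
        exact ⟨z - c • z₀, by simp [map_sub, h, hz₀], by abel⟩
      · rintro ⟨y, hy, rfl⟩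
        simp [hy, hz₀]
    rw [heq, measure_vadd, h0]
  -- measurability
  have hC'm : MeasurableSet C' :=
    (hC.isClosed.inter (isClosed_le hβc.abs continuous_const)).measurableSet
  have hTBm : MeasurableSet (T '' B) := (hBcpt.image hTcont).measurableSet
  -- measure of the image
  have himg : T '' B = (t • z₀) +ᵥ (s • B) := by
    ext z
    simp only [Set.mem_vadd_set, Set.mem_image, Set.mem_smul_set, vadd_eq_add, hT]
    constructor
    · rintro ⟨w, hw, rfl⟩; exact ⟨s • w, ⟨w, hw, rfl⟩, rfl⟩
    · rintro ⟨_, ⟨w, hw, rfl⟩, rfl⟩; exact ⟨w, hw, rfl⟩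
  have hmeasT : μ (T '' B) = ENNReal.ofReal (s ^ D) * μ B := by
    rw [himg, measure_vadd, Measure.addHaar_smul, hdim, abs_pow, abs_of_pos hs0]
  -- combine
  have hBfin : μ B ≠ ⊤ := hBcpt.measure_lt_top.ne
  have hunion : μ C' + μ (T '' B) ≤ μ B := by
    calc μ C' + μ (T '' B) = μ (C' ∪ T '' B) + μ (C' ∩ T '' B) :=
          (measure_union_add_inter _ hTBm).symm
      _ = μ (C' ∪ T '' B) := by rw [hnull, add_zero]
      _ ≤ μ B := measure_mono (union_subset hC'B hTBB)
  have hr : Real.exp (-2) ≤ s ^ D := slice_exp_bound D hD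
  have hsD1 : s ^ D ≤ 1 := pow_le_one₀ hs0.le hs1
  have hsplit : μ B = ENNReal.ofReal (1 - s ^ D) * μ B + ENNReal.ofReal (s ^ D) * μ B := by
    rw [← add_mul, ← ENNReal.ofReal_add (by linarith) (by positivity), sub_add_cancel,
      ENNReal.ofReal_one, one_mul]
  have h6 : μ C' + ENNReal.ofReal (s ^ D) * μ B ≤
      ENNReal.ofReal (1 - s ^ D) * μ B + ENNReal.ofReal (s ^ D) * μ B := by
    rw [← hsplit, ← hmeasT]; exact hunion
  have h7 : μ C' ≤ ENNReal.ofReal (1 - s ^ D) * μ B :=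
    ENNReal.le_of_add_le_add_right (ENNReal.mul_ne_top ENNReal.ofReal_ne_top hBfin) h6
  calc μ C' ≤ ENNReal.ofReal (1 - s ^ D) * μ B := h7
    _ ≤ ENNReal.ofReal (1 - Real.exp (-2)) * μ C :=
        mul_le_mul' (ENNReal.ofReal_le_ofReal (by linarith)) (measure_mono hBC)

theorem slice_volume_reduction {X : Type*} [NormedAddCommGroup X] [NormedSpace ℝ X]
    [MeasurableSpace X] [BorelSpace X] [FiniteDimensional ℝ X]
    (μ : MeasureTheory.Measure X) [μ.IsAddHaarMeasure]
    (D : ℕ) (hD : 1 ≤ D) (hdim : Module.finrank ℝ X = D)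
    (α : X →ₗ[ℝ] ℝ) (C : Set X) (hC : IsCompact C) (hconv : Convex ℝ C)
    (hmax : IsGreatest ((fun z => |α z|) '' C) 1) :
    μ {z ∈ C | |α z| ≤ 1 / (D + 1)} ≤
      ENNReal.ofReal (1 - Real.exp (-2)) * μ C := by
  obtain ⟨z₀, hz₀C, hz₀⟩ := hmax.1
  rcases (abs_eq (by norm_num : (0:ℝ) ≤ 1)).1 hz₀ with h1 | h1
  · exact slice_aux μ D hD hdim α C hC hconv z₀ hz₀C h1
  · have hneg : (-α) z₀ = 1 := by simp [h1]
    have := slice_aux μ D hD hdim (-α) C hC hconv z₀ hz₀C hneg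
    simpa using this
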